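/- For all integers a > 1, n > 1, and t ≥ n, and every word x of length n+1 over {0,...,a−1}, there exists an (a,n,t)-perfect necklace in which x appears as a (cyclic) substring. -/

import Mathlib

open Finset

namespace PNaux

lemma gl_eq {α : Type*} {l : List α} (h : l ≠ []) {y : α} (hy : l.getLast? = some y) :
    l.getLast h = y := by
  rw [List.getLast?_eq_getLast h] at hy
  exact Option.some.inj hy

lemma hd_eq {α : Type*} {l : List α} (h : l ≠ []) {y : α} (hy : l.head? = some y) :
    l.head h = y := by
  rw [List.head?_eq_head h] at hy
  exact Option.some.inj hy

variable {E V : Type*} [Fintype E] [DecidableEq E] [DecidableEq V]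

def EStep (src tgt : E → V) (e f : E) : Prop := tgt e = src f

lemma count_aux (src tgt : E → V) (u : V) :
    ∀ (l : List E) (e : E), (e :: l).Chain' (EStep src tgt) →
      ((e :: l).countP fun f => decide (src f = u)) +
          (if tgt ((e :: l).getLast (by simp)) = u then 1 else 0)
        = ((e :: l).countP fun f => decide (tgt f = u)) + (if src e = u then 1 else 0) := by
  intro l
  induction l with
  | nil =>
      intro e _
      simp only [List.countP_cons, List.countP_nil, List.getLast_singleton]
      by_cases h1 : src e = u <;> by_cases h2 : tgt e = u <;> simp [h1, h2]
  | cons f r ih =>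
      intro e hch
      rw [List.Chain', List.isChain_cons_cons] at hch
      have h1 : tgt e = src f := hch.1
      have h2 := ih f hch.2
      have hgl : (e :: f :: r).getLast (by simp) = (f :: r).getLast (by simp) :=
        List.getLast_cons _
      rw [hgl, List.countP_cons (p := fun f => decide (src f = u)) (a := e),
        List.countP_cons (p := fun f => decide (tgt f = u)) (a := e)]
      have h3 : (src f = u) ↔ (tgt e = u) := by rw [h1]
      have h6 : (if src f = u then (1:ℕ) else 0) = (if tgt e = u then 1 else 0) := by
        by_cases h5 : tgt e = u
        · rw [if_pos (h3.mpr h5), if_pos h5]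
        · rw [if_neg (fun hh => h5 (h3.mp hh)), if_neg h5]
      rw [h6] at h2
      simp only [decide_eq_true_eq]
      by_cases h4 : src e = u <;> by_cases h5 : tgt e = u
      · rw [if_pos h5] at h2; rw [if_pos h4, if_pos h5]; omega
      · rw [if_neg h5] at h2; rw [if_pos h4, if_neg h5]; omega
      · rw [if_pos h5] at h2; rw [if_neg h4, if_pos h5]; omega
      · rw [if_neg h5] at h2; rw [if_neg h4, if_neg h5]; omega

lemma countP_le_card (p : E → Prop) [DecidablePred p] {l : List E} (hl : l.Nodup) :
    (l.countP fun e => decide (p e)) ≤ (univ.filter p).card := by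
  classical
  rw [List.countP_eq_length_filter]
  have h1 : (l.filter (fun e => decide (p e))).Nodup := hl.filter _
  rw [← List.toFinset_card_of_nodup h1]
  apply Finset.card_le_card
  intro e he
  simp only [List.mem_toFinset, List.mem_filter, decide_eq_true_eq] at he
  simp [he.2]

theorem euler_circuit [Nonempty E] (src tgt : E → V)
    (hbal : ∀ u, (univ.filter fun e => src e = u).card = (univ.filter fun e => tgt e = u).card)
    (hconn : ∀ e f, Relation.ReflTransGen (EStep src tgt) e f) :
    ∃ l : List E, l.Nodup ∧ (∀ e, e ∈ l) ∧ l.Chain' (EStep src tgt) ∧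
      ∀ h : l ≠ [], EStep src tgt (l.getLast h) (l.head h) := by
  classical
  set P : ℕ → Prop := fun k => ∃ l : List E, (l.Nodup ∧ l.Chain' (EStep src tgt)) ∧ l.length = k
    with hP
  have hbound : ∀ k, P k → k ≤ Fintype.card E := by
    rintro k ⟨l, ⟨hnd, _⟩, hl⟩
    exact hl ▸ hnd.length_le_card
  set K := Nat.findGreatest P (Fintype.card E) with hK
  have hPK : P K := Nat.findGreatest_spec (Nat.zero_le _) ⟨[], ⟨List.nodup_nil, List.isChain_nil⟩, rfl⟩
  obtain ⟨l, ⟨hnd, hch⟩, hlK⟩ := hPK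
  have hmax : ∀ l' : List E, l'.Nodup → l'.Chain' (EStep src tgt) → l'.length ≤ K := by
    intro l' h1 h2
    exact Nat.le_findGreatest (hbound _ ⟨l', ⟨h1, h2⟩, rfl⟩) ⟨l', ⟨h1, h2⟩, rfl⟩
  have hne : l ≠ [] := by
    have h1 : (1 : ℕ) ≤ K := by
      have := hmax [Classical.arbitrary E] (by simp) (List.isChain_singleton _)
      simpa using this
    intro h
    rw [h] at hlK
    simp at hlK
    omega
  have hclosed : EStep src tgt (l.getLast hne) (l.head hne) := by
    by_contra hcl
    set u := tgt (l.getLast hne) with hu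
    have hcons : l.head hne :: l.tail = l := List.cons_head_tail hne
    have hcount := count_aux src tgt u l.tail (l.head hne) (by rw [hcons]; exact hch)
    have h9 : (l.head hne :: l.tail).getLast? = some (l.getLast hne) := by
      rw [hcons]; exact List.getLast?_eq_getLast hne
    have hgl : (l.head hne :: l.tail).getLast (by simp [hne]) = l.getLast hne :=
      gl_eq (List.cons_ne_nil _ _) h9
    rw [hgl, hcons] at hcount
    have hsh : ¬ (src (l.head hne) = u) := fun h => hcl h.symm
    have h1 : (l.countP fun f => decide (src f = u)) + 1
        = l.countP fun f => decide (tgt f = u) := by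
      rw [if_pos rfl, if_neg hsh] at hcount
      omega
    have h2 : (l.countP fun f => decide (tgt f = u)) ≤ (univ.filter fun e => tgt e = u).card :=
      countP_le_card _ hnd
    have h3 : ∃ e, src e = u ∧ e ∉ l := by
      by_contra h
      push_neg at h
      have hsub : (univ.filter fun e => src e = u) ⊆
          (l.filter fun e => decide (src e = u)).toFinset := by
        intro e he
        simp only [Finset.mem_filter, Finset.mem_univ, true_and] at he
        simp [List.mem_filter, he, h e he]
      have h4 : (univ.filter fun e => src e = u).card ≤ l.countP fun f => decide (src f = u) := by
        calc (univ.filter fun e => src e = u).card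
            ≤ (l.filter fun e => decide (src e = u)).toFinset.card := Finset.card_le_card hsub
          _ = (l.filter fun e => decide (src e = u)).length :=
              List.toFinset_card_of_nodup (hnd.filter _)
          _ = _ := List.countP_eq_length_filter.symm
      rw [hbal u] at h4
      omega
    obtain ⟨e, hesrc, hel⟩ := h3
    have hnd' : (l ++ [e]).Nodup := by simp [List.nodup_append, hnd, hel]; intro a ha hae; exact hel (hae ▸ ha)
    have hch' : (l ++ [e]).Chain' (EStep src tgt) := by
      rw [List.Chain', List.isChain_append]
      refine ⟨hch, List.isChain_singleton e, ?_⟩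
      intro y hy z hz
      simp only [List.head?_cons, Option.mem_def, Option.some.injEq] at hz
      rw [List.getLast?_eq_getLast hne] at hy
      simp only [Option.mem_def, Option.some.injEq] at hy
      subst hy; subst hz
      exact hesrc.symm
    have := hmax _ hnd' hch'
    simp [hlK] at this
  have hcomp : ∀ f, f ∈ l := by
    by_contra h
    push_neg at h
    obtain ⟨f, hf⟩ := h
    have key : ∀ e g : E, Relation.ReflTransGen (EStep src tgt) e g → e ∈ l → g ∉ l →
        ∃ p q : E, p ∈ l ∧ q ∉ l ∧ EStep src tgt p q := by
      intro e g hr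
      induction hr with
      | refl => intro h1 h2; exact absurd h1 h2
      | @tail b c _ hbc ih =>
          intro h1 h2
          by_cases hb : b ∈ l
          · exact ⟨b, c, hb, h2, hbc⟩
          · exact ih h1 hb
    obtain ⟨p, q, hp, hq, hstep⟩ := key (l.head hne) f (hconn _ _) (List.head_mem hne) hf
    obtain ⟨A, B, hAB⟩ := List.append_of_mem hp
    have hchAB : (A ++ p :: B).Chain' (EStep src tgt) := hAB ▸ hch
    rw [List.Chain', List.isChain_split] at hchAB
    obtain ⟨hch1, hch2⟩ := hchAB
    have hperm : (B ++ (A ++ [p])).Perm l := by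
      rw [hAB, (by simp : A ++ p :: B = (A ++ [p]) ++ B)]
      exact List.perm_append_comm
    have hndrot : (B ++ (A ++ [p])).Nodup := hperm.nodup_iff.mpr hnd
    have hchrot : (B ++ (A ++ [p])).Chain' (EStep src tgt) := by
      rw [List.Chain', List.isChain_append]
      refine ⟨hch2.tail, hch1, ?_⟩
      intro y hy z hz
      rcases List.eq_nil_or_concat B with hB | ⟨B', b, hB⟩
      · subst hB; simp at hy
      · have hBne : B ≠ [] := by subst hB; simp
        have hy' : y = l.getLast hne := by
          rw [List.getLast?_eq_getLast hBne] at hy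
          simp only [Option.mem_def, Option.some.injEq] at hy
          subst hy
          symm
          apply gl_eq
          rw [hAB, (by simp : A ++ p :: B = (A ++ [p]) ++ B), List.getLast?_append,
            List.getLast?_eq_getLast hBne]
          rfl
        have hz' : z = l.head hne := by
          rcases List.eq_nil_or_concat A with hA | hA'
          · subst hA
            simp only [List.nil_append, List.head?_cons, Option.mem_def, Option.some.injEq] at hz
            subst hz
            symm
            apply hd_eq
            rw [hAB]
            simp
          · have hAne : A ≠ [] := by rcases hA' with ⟨A', a', rfl⟩; simp
            rw [List.head?_append, List.head?_eq_head hAne] at hz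
            simp only [Option.or_some, Option.some_or, Option.mem_def, Option.some.injEq] at hz
            subst hz
            symm
            apply hd_eq
            rw [hAB, List.head?_append, List.head?_eq_head hAne]
            rfl
        rw [hy', hz']
        exact hclosed
    have hql : q ∉ B ++ (A ++ [p]) := fun hmem => hq (hperm.mem_iff.mp hmem)
    have hnd' : ((B ++ (A ++ [p])) ++ [q]).Nodup := by
      simp only [List.nodup_append, hndrot, List.nodup_cons, List.not_mem_nil, not_false_iff,
        List.nodup_nil, and_true, true_and]
      intro a ha b hb hab
      simp only [List.mem_singleton] at hb
      subst hb
      subst hab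
      exact hql ha
    have hch' : ((B ++ (A ++ [p])) ++ [q]).Chain' (EStep src tgt) := by
      rw [List.Chain', List.isChain_append]
      refine ⟨hchrot, List.isChain_singleton q, ?_⟩
      intro y hy z hz
      simp only [List.head?_cons, Option.mem_def, Option.some.injEq] at hz
      have hrotne : B ++ (A ++ [p]) ≠ [] := by simp
      rw [List.getLast?_eq_getLast hrotne] at hy
      simp only [Option.mem_def, Option.some.injEq] at hy
      have hlast : (B ++ (A ++ [p])).getLast hrotne = p := by
        apply gl_eq
        rw [(by simp : B ++ (A ++ [p]) = (B ++ A) ++ [p]), List.getLast?_append]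
        rfl
      subst hz
      rw [← hy, hlast]
      exact hstep
    have hK1 := hmax _ hnd' hch'
    have hlen : ((B ++ (A ++ [p])) ++ [q]).length = l.length + 1 := by
      rw [List.length_append, hperm.length_eq]
      rfl
    omega
  exact ⟨l, hnd, hcomp, hch, fun _ => hclosed⟩



variable {a n t : ℕ}

abbrev NEdge (a n t : ℕ) := (Fin n → Fin a) × ZMod t
abbrev NVert (a n t : ℕ) := (Fin (n-1) → Fin a) × ZMod t

def esrc (e : NEdge a n t) : NVert a n t :=
  (fun m => e.1 ⟨m.1, by have := m.isLt; omega⟩, e.2)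

def etgt (e : NEdge a n t) : NVert a n t :=
  (fun m => e.1 ⟨m.1 + 1, by have := m.isLt; omega⟩, e.2 + 1)

def edge1 (t : ℕ) (x : Fin (n+1) → Fin a) : NEdge a n t :=
  (fun m => x ⟨m.1, by have := m.isLt; omega⟩, 0)

def edge2 (t : ℕ) (x : Fin (n+1) → Fin a) : NEdge a n t :=
  (fun m => x ⟨m.1 + 1, by have := m.isLt; omega⟩, 1)

lemma etgt_edge1 (x : Fin (n+1) → Fin a) : etgt (edge1 t x) = esrc (edge2 t x) := by
  unfold etgt esrc edge1 edge2
  refine Prod.ext rfl ?_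
  simp

lemma edge1_ne_edge2 (h2t : 2 ≤ t) (x : Fin (n+1) → Fin a) : edge1 t x ≠ edge2 t x := by
  intro h
  have h2 := congrArg Prod.snd h
  haveI : Fact (1 < t) := ⟨h2t⟩
  simp only [edge1, edge2] at h2
  exact zero_ne_one h2

def outEquiv (hn : 1 ≤ n) (u : NVert a n t) :
    {e : NEdge a n t // esrc e = u} ≃ Fin a where
  toFun e := e.1.1 ⟨n-1, by omega⟩
  invFun α := ⟨(fun m => if h : m.1 < n-1 then u.1 ⟨m.1, h⟩ else α, u.2), by
    refine Prod.ext ?_ rfl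
    funext m
    simp only [esrc]
    rw [dif_pos m.isLt]⟩
  left_inv := by
    rintro ⟨⟨w, j⟩, he⟩
    apply Subtype.ext
    refine Prod.ext ?_ ?_
    · funext m
      by_cases h : m.1 < n - 1
      · simp only [dif_pos h]
        have := congrFun (congrArg Prod.fst he) ⟨m.1, h⟩
        simp only [esrc] at this
        rw [← this]
      · simp only [dif_neg h]
        congr 1
        have := m.isLt
        exact Fin.ext (by simp; omega)
    · exact (congrArg Prod.snd he).symm
  right_inv := by
    intro α
    simp only []
    rw [dif_neg (by omega)]

def inEquiv (hn : 1 ≤ n) (u : NVert a n t) :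
    {e : NEdge a n t // etgt e = u} ≃ Fin a where
  toFun e := e.1.1 ⟨0, by omega⟩
  invFun α := ⟨(fun m => if h : m.1 = 0 then α else u.1 ⟨m.1 - 1, by have := m.isLt; omega⟩,
      u.2 - 1), by
    refine Prod.ext ?_ ?_
    · funext m
      simp only [etgt]
      rw [dif_neg (by omega)]
      congr 1
    · simp [etgt]⟩
  left_inv := by
    rintro ⟨⟨w, j⟩, he⟩
    apply Subtype.ext
    refine Prod.ext ?_ ?_
    · funext m
      by_cases h : m.1 = 0
      · simp only [dif_pos h]
        congr 1
        exact Fin.ext h.symm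
      · simp only [dif_neg h]
        have := congrFun (congrArg Prod.fst he) ⟨m.1 - 1, by have := m.isLt; omega⟩
        simp only [etgt] at this
        rw [← this]
        congr 1
        exact Fin.ext (by simp; omega)
    · have := congrArg Prod.snd he
      simp only [etgt] at this
      rw [sub_eq_iff_eq_add]
      exact this.symm
  right_inv := by
    intro α
    simp

lemma card_out [NeZero t] (hn : 1 ≤ n) (u : NVert a n t) :
    (univ.filter fun e : NEdge a n t => esrc e = u).card = a := by
  classical
  rw [← Fintype.card_subtype]
  rw [Fintype.card_congr (outEquiv hn u)]
  exact Fintype.card_fin a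

lemma card_in [NeZero t] (hn : 1 ≤ n) (u : NVert a n t) :
    (univ.filter fun e : NEdge a n t => etgt e = u).card = a := by
  classical
  rw [← Fintype.card_subtype]
  rw [Fintype.card_congr (inEquiv hn u)]
  exact Fintype.card_fin a


def srcE (x : Fin (n+1) → Fin a) (e : {e : NEdge a n t // e ≠ edge2 t x}) : NVert a n t :=
  esrc e.1

def tgtE (x : Fin (n+1) → Fin a) (e : {e : NEdge a n t // e ≠ edge2 t x}) : NVert a n t :=
  if e.1 = edge1 t x then etgt (edge2 t x) else etgt e.1

lemma balance [NeZero t] (hn : 1 ≤ n) (h2t : 2 ≤ t) (x : Fin (n+1) → Fin a)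
    (u : NVert a n t) :
    (univ.filter fun e : {e : NEdge a n t // e ≠ edge2 t x} => srcE x e = u).card
      = (univ.filter fun e : {e : NEdge a n t // e ≠ edge2 t x} => tgtE x e = u).card := by
  classical
  have hne12 : edge1 t x ≠ edge2 t x := edge1_ne_edge2 h2t x
  show (univ.filter fun e : {e : NEdge a n t // e ≠ edge2 t x} => esrc e.1 = u).card
    = (univ.filter fun e : {e : NEdge a n t // e ≠ edge2 t x} =>
        (if e.1 = edge1 t x then etgt (edge2 t x) else etgt e.1) = u).card
  rw [← Fintype.card_subtype, ← Fintype.card_subtype]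
  rw [Fintype.card_congr (Equiv.subtypeSubtypeEquivSubtypeInter
        (fun e : NEdge a n t => e ≠ edge2 t x) (fun e => esrc e = u))]
  rw [Fintype.card_congr (Equiv.subtypeSubtypeEquivSubtypeInter
        (fun e : NEdge a n t => e ≠ edge2 t x)
        (fun e => (if e = edge1 t x then etgt (edge2 t x) else etgt e) = u))]
  rw [Fintype.card_subtype, Fintype.card_subtype]
  set S := univ.filter (fun e : NEdge a n t => esrc e = u) with hSdef
  set T := univ.filter (fun e : NEdge a n t => etgt e = u) with hTdef
  have hS : S.card = a := card_out hn u
  have hT : T.card = a := card_in hn u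
  -- LHS
  have hL : (univ.filter fun e : NEdge a n t => e ≠ edge2 t x ∧ esrc e = u)
      = S.erase (edge2 t x) := by
    ext e
    simp [hSdef, and_comm, Finset.mem_erase]
  -- RHS
  have hcase2 : (T.erase (edge1 t x)).card = a - (if etgt (edge1 t x) = u then 1 else 0) := by
    have hmem : edge1 t x ∈ T ↔ etgt (edge1 t x) = u := by simp [hTdef]
    by_cases h : etgt (edge1 t x) = u
    · rw [if_pos h, Finset.card_erase_of_mem (hmem.mpr h), hT]
    · rw [if_neg h, Finset.erase_eq_of_notMem (fun hc => h (hmem.mp hc)), hT]; omega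
  have hcase1 : (S.erase (edge2 t x)).card = a - (if etgt (edge1 t x) = u then 1 else 0) := by
    have hmem : edge2 t x ∈ S ↔ esrc (edge2 t x) = u := by simp [hSdef]
    rw [← etgt_edge1 x] at hmem
    by_cases h : etgt (edge1 t x) = u
    · rw [if_pos h, Finset.card_erase_of_mem (hmem.mpr h), hS]
    · rw [if_neg h, Finset.erase_eq_of_notMem (fun hc => h (hmem.mp hc)), hS]; omega
  have hmem2 : edge2 t x ∈ T.erase (edge1 t x) ↔ etgt (edge2 t x) = u := by
    simp [Finset.mem_erase, Ne.symm hne12, hTdef]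
  rw [hL, hcase1]
  by_cases h2 : etgt (edge2 t x) = u
  · have hR : (univ.filter fun e : NEdge a n t =>
        e ≠ edge2 t x ∧ (if e = edge1 t x then etgt (edge2 t x) else etgt e) = u)
        = insert (edge1 t x) ((T.erase (edge1 t x)).erase (edge2 t x)) := by
      ext e
      by_cases he1 : e = edge1 t x
      · subst he1
        simp [hne12, h2]
      · simp only [Finset.mem_filter, Finset.mem_univ, true_and, Finset.mem_insert,
          Finset.mem_erase, hTdef]
        simp [he1]
    rw [hR, Finset.card_insert_of_notMem (by simp [Finset.mem_erase]),
      Finset.card_erase_of_mem (hmem2.mpr h2), hcase2]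
    have hpos : 1 ≤ (T.erase (edge1 t x)).card := Finset.card_pos.mpr ⟨_, hmem2.mpr h2⟩
    omega
  · have hR : (univ.filter fun e : NEdge a n t =>
        e ≠ edge2 t x ∧ (if e = edge1 t x then etgt (edge2 t x) else etgt e) = u)
        = T.erase (edge1 t x) := by
      ext e
      by_cases he1 : e = edge1 t x
      · subst he1
        simp [hne12, h2, Finset.mem_erase]
      · simp only [Finset.mem_filter, Finset.mem_univ, true_and, Finset.mem_erase, hTdef]
        simp [he1]
        intro hh
        exact fun hc => h2 (hc ▸ hh)
    rw [hR, hcase2]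


def EdS (u : ℕ → Fin a) (c : ZMod t) (s : ℕ) : NEdge a n t :=
  (fun m => u (s + m.1), c + (s : ℕ))

lemma estep_EdS (u : ℕ → Fin a) (c : ZMod t) (s : ℕ) :
    etgt (EdS (n := n) u c s) = esrc (EdS (n := n) u c (s+1)) := by
  refine Prod.ext ?_ ?_
  · funext m
    show u (s + (m.1 + 1)) = u ((s+1) + m.1)
    exact congrArg u (by omega)
  · show c + (s : ℕ) + 1 = c + ((s+1 : ℕ) : ZMod t)
    push_cast
    ring

lemma EdS_word {u : ℕ → Fin a} {c : ZMod t} {s : ℕ} {w : Fin n → Fin a} {d : ZMod t}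
    (hword : ∀ m : Fin n, u (s + m.1) = w m) (hc : c + (s : ℕ) = d) :
    EdS u c s = (w, d) := Prod.ext (funext hword) hc

def other (ha : 1 < a) (β : Fin a) : Fin a :=
  if β = ⟨0, by omega⟩ then ⟨1, ha⟩ else ⟨0, by omega⟩

lemma other_ne (ha : 1 < a) (β : Fin a) : other ha β ≠ β := by
  unfold other
  split_ifs with h
  · rw [h]
    simp [Fin.ext_iff]
  · exact fun hc => h hc.symm

def xx (x : Fin (n+1) → Fin a) (k : ℕ) : Fin a :=
  if h : k < n+1 then x ⟨k, h⟩ else x ⟨0, by omega⟩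

noncomputable def strm (ha : 1 < a) (x : Fin (n+1) → Fin a) (A B : Fin n → Fin a) (c : ZMod t) (L : ℕ) :
    ℕ → Fin a := fun p =>
  if h1 : p < n then A ⟨p, h1⟩
  else if h2 : L ≤ p ∧ p - L < n then B ⟨p - L, h2.2⟩
  else @dite _ (∃ s0, s0 ≤ L - 1 ∧ (c + (s0 : ℕ) : ZMod t) = 0 ∧ p = min (max (s0+1) n) (L-1))
    (Classical.propDecidable _)
    (fun h3 => other ha (xx x (p - Classical.choose h3)))
    (fun _ => xx x 0)

lemma strm_prefix (ha : 1 < a) (x : Fin (n+1) → Fin a) (A B : Fin n → Fin a) (c : ZMod t)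
    (L : ℕ) {p : ℕ} (hp : p < n) : strm ha x A B c L p = A ⟨p, hp⟩ := by
  unfold strm
  rw [dif_pos hp]

lemma strm_suffix (ha : 1 < a) (x : Fin (n+1) → Fin a) (A B : Fin n → Fin a) (c : ZMod t)
    (L : ℕ) (hL : n ≤ L) (m : Fin n) : strm ha x A B c L (L + m.1) = B m := by
  have hm := m.isLt
  unfold strm
  rw [dif_neg (by omega), dif_pos (⟨by omega, by omega⟩ : L ≤ L + m.1 ∧ L + m.1 - L < n)]
  congr 1
  exact Fin.ext (by omega : L + m.1 - L = m.1)

lemma anchor_unique (hn : 1 < n) (ht : n ≤ t) {L : ℕ} (hL : n + 2 ≤ L) (c : ZMod t)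
    {s0 s1 : ℕ} (h0 : s0 ≤ L-1) (hc0 : c + (s0 : ℕ) = 0) (h1 : s1 ≤ L-1)
    (hc1 : c + (s1 : ℕ) = 0)
    (hp : min (max (s0+1) n) (L-1) = min (max (s1+1) n) (L-1)) : s0 = s1 := by
  have hmod : ((s0 : ℕ) : ZMod t) = ((s1 : ℕ) : ZMod t) :=
    add_left_cancel (hc0.trans hc1.symm)
  have hmod2 : s0 % t = s1 % t := (ZMod.natCast_eq_natCast_iff s0 s1 t).mp hmod
  have hdvd : t ∣ (max s0 s1 - min s0 s1) := by
    rcases le_total s0 s1 with h | h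
    · rw [max_eq_right h, min_eq_left h]
      exact (Nat.modEq_iff_dvd' h).mp hmod2
    · rw [max_eq_left h, min_eq_right h]
      exact (Nat.modEq_iff_dvd' h).mp (Nat.ModEq.symm hmod2)
  rcases hdvd with ⟨k, hk⟩
  by_cases hk0 : k = 0
  · rw [hk0] at hk
    omega
  · have hge : t ≤ max s0 s1 - min s0 s1 := by
      rw [hk]
      exact Nat.le_mul_of_pos_right t (by omega)
    omega

set_option maxHeartbeats 1600000 in
lemma strm_avoid (ha : 1 < a) (hn : 1 < n) (ht : n ≤ t)
    (x : Fin (n+1) → Fin a) (A B : Fin n → Fin a) (c : ZMod t) (L : ℕ) (hL : n + 2 ≤ L) :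
    ∀ s, 1 ≤ s → s ≤ L - 1 →
      EdS (strm ha x A B c L) c s ≠ edge1 t x ∧ EdS (strm ha x A B c L) c s ≠ edge2 t x := by
  intro s hs1 hs2
  constructor
  · intro heq
    have hw : ∀ m : Fin n, strm ha x A B c L (s + m.1) = (edge1 t x).1 m :=
      fun m => congrFun (congrArg Prod.fst heq) m
    have hclass : c + (s : ℕ) = 0 := congrArg Prod.snd heq
    set p := min (max (s+1) n) (L-1) with hpdef
    have hps0 : p - s < n + 1 := by omega
    have hps1 : s + (p - s) = p := by omega
    have hps2 : p - s < n := by omega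
    have hpn : ¬ p < n := by omega
    have hpL : ¬ (L ≤ p ∧ p - L < n) := by omega
    have hex : ∃ s0, s0 ≤ L - 1 ∧ (c + (s0 : ℕ) : ZMod t) = 0 ∧ p = min (max (s0+1) n) (L-1) :=
      ⟨s, hs2, hclass, hpdef⟩
    have hval : strm ha x A B c L p = other ha (xx x (p - Classical.choose hex)) := by
      unfold strm
      rw [dif_neg hpn, dif_neg hpL, dif_pos hex]
    obtain ⟨hc1, hc2, hc3⟩ := Classical.choose_spec hex
    have hcs : Classical.choose hex = s :=
      anchor_unique hn ht hL c hc1 hc2 hs2 hclass (hc3.symm.trans hpdef)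
    rw [hcs] at hval
    clear hcs hc1 hc2 hc3 hex
    have hwp := hw ⟨p - s, hps2⟩
    simp only [edge1] at hwp
    rw [hps1] at hwp
    have hxx : xx x (p - s) = x ⟨p - s, hps0⟩ := by
      unfold xx
      rw [dif_pos hps0]
    rw [hval, hxx] at hwp
    exact other_ne ha _ hwp
  · intro heq
    have hw : ∀ m : Fin n, strm ha x A B c L (s + m.1) = (edge2 t x).1 m :=
      fun m => congrFun (congrArg Prod.fst heq) m
    have hclass : c + (s : ℕ) = 1 := congrArg Prod.snd heq
    have hclass0 : c + ((s - 1 : ℕ) : ZMod t) = 0 := by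
      have h1 : ((s : ℕ) : ZMod t) = ((s - 1 : ℕ) : ZMod t) + 1 := by
        conv_lhs => rw [(by omega : s = (s-1) + 1)]
        push_cast
        ring
      rw [h1] at hclass
      linear_combination hclass
    set p := min (max ((s-1)+1) n) (L-1) with hpdef
    have hps0 : p - (s - 1) < n + 1 := by omega
    have hps1 : s + (p - s) = p := by omega
    have hps2 : p - s < n := by omega
    have hps3 : p - (s - 1) = (p - s) + 1 := by omega
    have hps4 : s - 1 ≤ L - 1 := by omega
    have hpn : ¬ p < n := by omega
    have hpL : ¬ (L ≤ p ∧ p - L < n) := by omega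
    have hex : ∃ s0, s0 ≤ L - 1 ∧ (c + (s0 : ℕ) : ZMod t) = 0 ∧ p = min (max (s0+1) n) (L-1) :=
      ⟨s - 1, hps4, hclass0, hpdef⟩
    have hval : strm ha x A B c L p = other ha (xx x (p - Classical.choose hex)) := by
      unfold strm
      rw [dif_neg hpn, dif_neg hpL, dif_pos hex]
    obtain ⟨hc1, hc2, hc3⟩ := Classical.choose_spec hex
    have hcs : Classical.choose hex = s - 1 :=
      anchor_unique hn ht hL c hc1 hc2 hps4 hclass0 (hc3.symm.trans hpdef)
    rw [hcs] at hval
    clear hcs hc1 hc2 hc3 hex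
    have hwp := hw ⟨p - s, hps2⟩
    simp only [edge2] at hwp
    rw [hps1] at hwp
    have hxx : xx x (p - (s - 1)) = x ⟨(p - s) + 1, by omega⟩ := by
      unfold xx
      rw [dif_pos hps0]
      congr 1
      exact Fin.ext hps3
    rw [hval, hxx] at hwp
    exact other_ne ha _ hwp

lemma reach_seg [NeZero t] (x : Fin (n+1) → Fin a) (u : ℕ → Fin a) (c : ZMod t) (b : ℕ) :
    ∀ (k : ℕ) (hbk : b ≤ k)
      (hAll : ∀ s, b ≤ s → s ≤ k → EdS (n := n) u c s ≠ edge2 t x)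
      (_ : ∀ s, b ≤ s → s < k → EdS (n := n) u c s ≠ edge1 t x)
      (hb : EdS (n := n) u c b ≠ edge2 t x) (hk : EdS (n := n) u c k ≠ edge2 t x),
      Relation.ReflTransGen (EStep (srcE x) (tgtE x)) ⟨EdS u c b, hb⟩ ⟨EdS u c k, hk⟩ := by
  intro k hbk
  induction k, hbk using Nat.le_induction with
  | base =>
      intro _ _ _ _
      exact Relation.ReflTransGen.refl
  | succ k hbk ih =>
      intro hAll hne1 hb hk
      have hstep : EStep (srcE x) (tgtE x)
          (⟨EdS u c k, hAll k hbk (by omega)⟩ : {e : NEdge a n t // e ≠ edge2 t x})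
          ⟨EdS u c (k+1), hk⟩ := by
        simp only [EStep, tgtE, srcE]
        rw [if_neg (hne1 k hbk (by omega))]
        exact estep_EdS u c k
      exact Relation.ReflTransGen.tail
        (ih (fun s h1 h2 => hAll s h1 (by omega)) (fun s h1 h2 => hne1 s h1 (by omega))
          hb (hAll k hbk (by omega))) hstep

lemma conn (ha : 1 < a) (hn : 1 < n) (ht : n ≤ t) [NeZero t] (x : Fin (n+1) → Fin a) :
    ∀ e f : {e : NEdge a n t // e ≠ edge2 t x},
      Relation.ReflTransGen (EStep (srcE x) (tgtE x)) e f := by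
  have h2t : 2 ≤ t := le_trans hn ht
  have hub_ne : edge1 t x ≠ edge2 t x := edge1_ne_edge2 h2t x
  have tohub : ∀ g : {e : NEdge a n t // e ≠ edge2 t x}, g.1 ≠ edge1 t x →
      Relation.ReflTransGen (EStep (srcE x) (tgtE x)) g ⟨edge1 t x, hub_ne⟩ := by
    intro g hg1
    set d : ZMod t := 0 - g.1.2 - ((n+2 : ℕ) : ZMod t) with hd
    set L := n + 2 + d.val with hLdef
    have hL : n + 2 ≤ L := Nat.le_add_right _ _
    set B : Fin n → Fin a := fun m => x ⟨m.1, by have := m.isLt; omega⟩ with hB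
    set u := strm ha x g.1.1 B g.1.2 L with hu
    have havoid := strm_avoid ha hn ht x g.1.1 B g.1.2 L hL
    rw [← hu] at havoid
    have hclassL : g.1.2 + ((L : ℕ) : ZMod t) = 0 := by
      rw [hLdef]
      push_cast
      rw [ZMod.natCast_rightInverse d, hd]
      push_cast
      ring
    have hEd0 : EdS (n := n) u g.1.2 0 = g.1 := by
      refine EdS_word ?_ ?_
      · intro m
        have h0 : (0 + m.1 : ℕ) = m.1 := by omega
        rw [h0, hu, strm_prefix ha x g.1.1 B g.1.2 L m.isLt]
      · simp
    have hEdL : EdS (n := n) u g.1.2 L = edge1 t x := by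
      refine EdS_word ?_ hclassL
      intro m
      rw [hu]
      exact strm_suffix ha x g.1.1 B g.1.2 L (by omega) m
    have hAll : ∀ s', 0 ≤ s' → s' ≤ L - 1 → EdS (n := n) u g.1.2 s' ≠ edge2 t x := by
      intro s' _ hs'
      rcases Nat.eq_zero_or_pos s' with h0 | h0
      · rw [h0, hEd0]; exact g.2
      · exact (havoid s' h0 hs').2
    have hne1 : ∀ s', 0 ≤ s' → s' < L - 1 → EdS (n := n) u g.1.2 s' ≠ edge1 t x := by
      intro s' _ hs'
      rcases Nat.eq_zero_or_pos s' with h0 | h0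
      · rw [h0, hEd0]; exact hg1
      · exact (havoid s' h0 (by omega)).1
    have hreach := reach_seg x u g.1.2 0 (L-1) (by omega) hAll hne1
      (hAll 0 le_rfl (by omega)) (hAll (L-1) (by omega) le_rfl)
    have hgeq : (⟨EdS (n := n) u g.1.2 0, hAll 0 le_rfl (by omega)⟩ :
        {e : NEdge a n t // e ≠ edge2 t x}) = g := Subtype.ext hEd0
    rw [hgeq] at hreach
    refine hreach.tail ?_
    simp only [EStep, tgtE, srcE]
    rw [if_neg ((havoid (L-1) (by omega) le_rfl).1)]
    rw [← hEdL]
    have hstp := estep_EdS (n := n) u g.1.2 (L-1)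
    rw [(by omega : L - 1 + 1 = L)] at hstp
    exact hstp
  have fromhub : ∀ f : {e : NEdge a n t // e ≠ edge2 t x}, f.1 ≠ edge1 t x →
      Relation.ReflTransGen (EStep (srcE x) (tgtE x)) ⟨edge1 t x, hub_ne⟩ f := by
    intro f hf1
    set d : ZMod t := f.1.2 - 1 - ((n+2 : ℕ) : ZMod t) with hd
    set L := n + 2 + d.val with hLdef
    have hL : n + 2 ≤ L := Nat.le_add_right _ _
    set A : Fin n → Fin a := fun m => x ⟨m.1 + 1, by have := m.isLt; omega⟩ with hA
    set u := strm ha x A f.1.1 (1 : ZMod t) L with hu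
    have havoid := strm_avoid ha hn ht x A f.1.1 (1 : ZMod t) L hL
    rw [← hu] at havoid
    have hclassL : (1 : ZMod t) + ((L : ℕ) : ZMod t) = f.1.2 := by
      rw [hLdef]
      push_cast
      rw [ZMod.natCast_rightInverse d, hd]
      push_cast
      ring
    have hEd0 : EdS (n := n) u 1 0 = edge2 t x := by
      refine EdS_word ?_ ?_
      · intro m
        have h0 : (0 + m.1 : ℕ) = m.1 := by omega
        rw [h0, hu, strm_prefix ha x A f.1.1 (1 : ZMod t) L m.isLt]
      · simp
    have hEdL : EdS (n := n) u 1 L = f.1 := by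
      refine EdS_word ?_ hclassL
      intro m
      rw [hu]
      exact strm_suffix ha x A f.1.1 (1 : ZMod t) L (by omega) m
    have hAll : ∀ s', 1 ≤ s' → s' ≤ L → EdS (n := n) u 1 s' ≠ edge2 t x := by
      intro s' h1 hs'
      rcases Nat.lt_or_ge s' L with h0 | h0
      · exact (havoid s' h1 (by omega)).2
      · have : s' = L := by omega
        rw [this, hEdL]; exact f.2
    have hne1 : ∀ s', 1 ≤ s' → s' < L → EdS (n := n) u 1 s' ≠ edge1 t x := by
      intro s' h1 hs'
      exact (havoid s' h1 (by omega)).1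
    have hreach := reach_seg x u 1 1 L (by omega) hAll hne1
      (hAll 1 le_rfl (by omega)) (hAll L (by omega) le_rfl)
    have hfeq : (⟨EdS (n := n) u 1 L, hAll L (by omega) le_rfl⟩ :
        {e : NEdge a n t // e ≠ edge2 t x}) = f := Subtype.ext hEdL
    rw [hfeq] at hreach
    refine Relation.ReflTransGen.trans (Relation.ReflTransGen.single ?_) hreach
    simp only [EStep, tgtE, srcE, if_true]
    rw [← hEd0]
    exact estep_EdS u 1 0
  intro e f
  by_cases he : e.1 = edge1 t x
  · have he' : e = ⟨edge1 t x, hub_ne⟩ := Subtype.ext he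
    by_cases hf : f.1 = edge1 t x
    · have hf' : f = ⟨edge1 t x, hub_ne⟩ := Subtype.ext hf
      rw [he', hf']
    · rw [he']
      exact fromhub f hf
  · by_cases hf : f.1 = edge1 t x
    · have hf' : f = ⟨edge1 t x, hub_ne⟩ := Subtype.ext hf
      rw [hf']
      exact tohub e he
    · exact (tohub e he).trans (fromhub f hf)

section Expansion

variable {x : Fin (n+1) → Fin a}

def expandE (x : Fin (n+1) → Fin a) (e : {e : NEdge a n t // e ≠ edge2 t x}) :
    List (NEdge a n t) :=
  if e.1 = edge1 t x then [edge1 t x, edge2 t x] else [e.1]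

lemma expand_ne_nil (e : {e : NEdge a n t // e ≠ edge2 t x}) : expandE x e ≠ [] := by
  unfold expandE
  split_ifs <;> simp

lemma expand_head (e : {e : NEdge a n t // e ≠ edge2 t x}) :
    ∀ y ∈ (expandE x e).head?, esrc y = srcE x e := by
  unfold expandE srcE
  split_ifs with h
  · intro y hy
    simp only [List.head?_cons, Option.mem_def, Option.some.injEq] at hy
    subst hy
    rw [h]
  · intro y hy
    simp only [List.head?_cons, Option.mem_def, Option.some.injEq] at hy
    subst hy
    rfl

lemma expand_last (e : {e : NEdge a n t // e ≠ edge2 t x}) :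
    ∀ y ∈ (expandE x e).getLast?, etgt y = tgtE x e := by
  unfold expandE tgtE
  split_ifs with h
  · intro y hy
    simp only [List.getLast?_cons_cons, List.getLast?_singleton, Option.mem_def,
      Option.some.injEq] at hy
    subst hy
    rfl
  · intro y hy
    simp only [List.getLast?_singleton, Option.mem_def, Option.some.injEq] at hy
    subst hy
    rfl

lemma expand_chain (e : {e : NEdge a n t // e ≠ edge2 t x}) :
    (expandE x e).Chain' (EStep esrc etgt) := by
  unfold expandE
  split_ifs with h
  · rw [List.Chain', List.isChain_cons_cons]
    exact ⟨etgt_edge1 x, List.isChain_singleton _⟩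
  · exact List.isChain_singleton _

lemma mem_expand {f : NEdge a n t} {e : {e : NEdge a n t // e ≠ edge2 t x}}
    (hf : f ∈ expandE x e) : f = e.1 ∨ (e.1 = edge1 t x ∧ f = edge2 t x) := by
  unfold expandE at hf
  split_ifs at hf with h
  · rcases List.mem_cons.mp hf with h1 | h1
    · exact Or.inl (h1.trans h.symm)
    · simp only [List.mem_singleton] at h1
      exact Or.inr ⟨h, h1⟩
  · simp only [List.mem_singleton] at hf
    exact Or.inl hf

lemma head?_flatMap (l : List {e : NEdge a n t // e ≠ edge2 t x}) (hl : l ≠ []) :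
    (l.flatMap (expandE x)).head? = (expandE x (l.head hl)).head? := by
  rcases l with _ | ⟨e, r⟩
  · exact absurd rfl hl
  · rw [List.flatMap_cons, List.head?_append, List.head_cons]
    rcases hh : (expandE x e).head? with _ | y
    · exact absurd (List.head?_eq_none_iff.mp hh) (expand_ne_nil e)
    · simp

lemma getLast?_flatMap (l : List {e : NEdge a n t // e ≠ edge2 t x}) (hl : l ≠ []) :
    (l.flatMap (expandE x)).getLast? = (expandE x (l.getLast hl)).getLast? := by
  induction l with
  | nil => exact absurd rfl hl
  | cons e r ih =>
      rcases r with _ | ⟨f, r'⟩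
      · simp [List.flatMap_cons]
      · rw [List.flatMap_cons, List.getLast?_append, ih (by simp),
          List.getLast_cons (by simp : (f :: r') ≠ [])]
        rcases hh : (expandE x ((f :: r').getLast (by simp))).getLast? with _ | y
        · exact absurd (List.getLast?_eq_none_iff.mp hh) (expand_ne_nil _)
        · simp

lemma chain'_flatMap (l : List {e : NEdge a n t // e ≠ edge2 t x})
    (hch : l.Chain' (EStep (srcE x) (tgtE x))) :
    (l.flatMap (expandE x)).Chain' (EStep esrc etgt) := by
  induction l with
  | nil => exact List.isChain_nil
  | cons e r ih =>
      rw [List.flatMap_cons, List.Chain', List.isChain_append]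
      obtain ⟨hhead, htail⟩ := List.isChain_cons.mp hch
      refine ⟨expand_chain e, ih htail, ?_⟩
      intro p hp q hq
      rcases r with _ | ⟨f, r'⟩
      · simp at hq
      · rw [head?_flatMap (f :: r') (by simp)] at hq
        have h1 : etgt p = tgtE x e := expand_last e p hp
        have h2 : esrc q = srcE x ((f :: r').head (by simp)) := expand_head _ q hq
        have h3 : EStep (srcE x) (tgtE x) e f := hhead f rfl
        show etgt p = esrc q
        rw [h1, h2]
        exact h3

lemma nodup_flatMap (h2t : 2 ≤ t) (l : List {e : NEdge a n t // e ≠ edge2 t x})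
    (hnd : l.Nodup) : (l.flatMap (expandE x)).Nodup := by
  induction l with
  | nil => simp
  | cons e r ih =>
      rw [List.flatMap_cons, List.nodup_append]
      obtain ⟨hmem, hnd'⟩ := List.nodup_cons.mp hnd
      refine ⟨?_, ih hnd', ?_⟩
      · unfold expandE
        split_ifs with h
        · simp [edge1_ne_edge2 h2t x]
        · simp
      · intro f hf1 f' hf2 hff'
        subst hff'
        obtain ⟨g, hg, hfg⟩ := List.mem_flatMap.mp hf2
        rcases mem_expand hf1 with h1 | ⟨h1, h1'⟩ <;>
          rcases mem_expand hfg with h2 | ⟨h2, h2'⟩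
        · exact hmem (by rwa [Subtype.ext (h1.symm.trans h2 : e.1 = g.1)])
        · exact e.2 (h1 ▸ h2')
        · exact g.2 (h2 ▸ h1')
        · exact hmem (by rwa [Subtype.ext (h1.trans h2.symm : e.1 = g.1)])

lemma complete_flatMap (l : List {e : NEdge a n t // e ≠ edge2 t x})
    (hub_ne : edge1 t x ≠ edge2 t x)
    (hcompl : ∀ e : {e : NEdge a n t // e ≠ edge2 t x}, e ∈ l) :
    ∀ f : NEdge a n t, f ∈ l.flatMap (expandE x) := by
  intro f
  by_cases hf2 : f = edge2 t x
  · refine List.mem_flatMap.mpr ⟨⟨edge1 t x, hub_ne⟩, hcompl _, ?_⟩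
    unfold expandE
    rw [if_pos rfl]
    simp [hf2]
  · by_cases hf1 : f = edge1 t x
    · refine List.mem_flatMap.mpr ⟨⟨edge1 t x, hub_ne⟩, hcompl _, ?_⟩
      unfold expandE
      rw [if_pos rfl]
      simp [hf1]
    · refine List.mem_flatMap.mpr ⟨⟨f, hf2⟩, hcompl _, ?_⟩
      unfold expandE
      rw [if_neg hf1]
      simp

end Expansion

lemma exists_cycle [NeZero t] (ha : 1 < a) (hn : 1 < n) (ht : n ≤ t)
    (x : Fin (n+1) → Fin a) :
    ∃ LL : List (NEdge a n t), LL.Nodup ∧ (∀ f, f ∈ LL) ∧ LL.Chain' (EStep esrc etgt) ∧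
      (∀ h : LL ≠ [], EStep esrc etgt (LL.getLast h) (LL.head h)) ∧
      ∃ (i : ℕ) (h2 : i + 1 < LL.length),
        LL[i]'(by omega) = edge1 t x ∧ LL[i+1]'h2 = edge2 t x := by
  classical
  have h2t : 2 ≤ t := le_trans hn ht
  have hub_ne : edge1 t x ≠ edge2 t x := edge1_ne_edge2 h2t x
  haveI : Nonempty {e : NEdge a n t // e ≠ edge2 t x} := ⟨⟨edge1 t x, hub_ne⟩⟩
  obtain ⟨l, hnd, hcompl, hch, hcl⟩ :=
    euler_circuit (srcE x) (tgtE x) (balance (by omega) h2t x) (conn ha hn ht x)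
  have hlne : l ≠ [] := by
    intro h
    have := hcompl ⟨edge1 t x, hub_ne⟩
    rw [h] at this
    simp at this
  refine ⟨l.flatMap (expandE x), nodup_flatMap h2t l hnd, complete_flatMap l hub_ne hcompl,
    chain'_flatMap l hch, ?_, ?_⟩
  · intro h
    have e1 : etgt ((l.flatMap (expandE x)).getLast h) = tgtE x (l.getLast hlne) := by
      apply expand_last
      rw [← getLast?_flatMap l hlne]
      exact List.getLast?_eq_getLast h
    have e2 : esrc ((l.flatMap (expandE x)).head h) = srcE x (l.head hlne) := by
      apply expand_head
      rw [← head?_flatMap l hlne]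
      exact List.head?_eq_head h
    show etgt _ = esrc _
    rw [e1, e2]
    exact hcl hlne
  · obtain ⟨P, S, hPS⟩ := List.append_of_mem (hcompl ⟨edge1 t x, hub_ne⟩)
    have hLLeq : l.flatMap (expandE x) =
        (P.flatMap (expandE x)) ++ (edge1 t x :: edge2 t x :: S.flatMap (expandE x)) := by
      rw [hPS, List.flatMap_append, List.flatMap_cons]
      congr 1
      have : expandE x (⟨edge1 t x, hub_ne⟩ : {e : NEdge a n t // e ≠ edge2 t x})
          = [edge1 t x, edge2 t x] := by
        unfold expandE
        rw [if_pos rfl]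
      rw [this]
      rfl
    have hlen : (l.flatMap (expandE x)).length
        = (P.flatMap (expandE x)).length + (2 + (S.flatMap (expandE x)).length) := by
      rw [hLLeq, List.length_append]
      simp
      omega
    refine ⟨(P.flatMap (expandE x)).length, by omega, ?_, ?_⟩
    · rw [List.getElem_of_eq hLLeq, List.getElem_append_right le_rfl]
      simp
    · rw [List.getElem_of_eq hLLeq, List.getElem_append_right (by omega)]
      have h9 : (P.flatMap (expandE x)).length + 1 - (P.flatMap (expandE x)).length = 1 := by
        omega
      simp only [h9]
      rfl

end PNaux

/-- `v`, viewed as a cyclic word of length `t * a ^ n`, is an `(a, n, t)`-perfect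
necklace. -/
def IsPerfectNecklace (a n t : ℕ) (v : ℕ → Fin a) : Prop :=
  (∀ i, v (i + t * a ^ n) = v i) ∧
  ∀ j : Fin t, ∀ w : Fin n → Fin a,
    ∃! i : Fin (t * a ^ n), (i : ℕ) % t = (j : ℕ) ∧
      ∀ m : Fin n, v ((i : ℕ) + (m : ℕ)) = w m

/-- For all `a > 1`, `n > 1`, `t ≥ n`, every word of length `n + 1` over `{0,…,a-1}`
appears as a (cyclic) substring of some `(a, n, t)`-perfect necklace. -/
theorem word_in_some_perfectNecklace (a n t : ℕ) (ha : 1 < a) (hn : 1 < n) (ht : n ≤ t)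
    (x : Fin (n + 1) → Fin a) :
    ∃ v : ℕ → Fin a, IsPerfectNecklace a n t v ∧
      ∃ i : ℕ, ∀ m : Fin (n + 1), v (i + (m : ℕ)) = x m := by
  classical
  haveI : NeZero t := ⟨by omega⟩
  obtain ⟨LL, hnd, hcompl, hch, hclosed, i0, hi0, he1, he2⟩ :=
    PNaux.exists_cycle ha hn ht x
  set M := LL.length with hM
  have hMpos : 0 < M := by omega
  have hlenM : M = t * a ^ n := by
    have h1 : LL.toFinset = Finset.univ := Finset.eq_univ_iff_forall.mpr
      (fun f => List.mem_toFinset.mpr (hcompl f))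
    have h2 : LL.toFinset.card = M := List.toFinset_card_of_nodup hnd
    rw [h1, Finset.card_univ] at h2
    have h3 : Fintype.card (PNaux.NEdge a n t) = a ^ n * t := by
      rw [Fintype.card_prod, Fintype.card_fun, ZMod.card, Fintype.card_fin, Fintype.card_fin]
    rw [h3] at h2
    rw [← h2, mul_comm]
  have hM2 : 1 < M := by
    have h4 : a ≤ a ^ n := Nat.le_self_pow (by omega) a
    have h5 := Nat.mul_le_mul (show 2 ≤ t by omega) (show 2 ≤ a ^ n by omega)
    omega
  set W : ℕ → PNaux.NEdge a n t := fun i => LL[i % M]'(Nat.mod_lt _ hMpos) with hW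
  have hnn : 0 < n := by omega
  set v : ℕ → Fin a := fun i => (W i).1 ⟨0, hnn⟩ with hv
  have hWlt : ∀ (i : ℕ) (h : i < M), W i = LL[i]'h := by
    intro i h
    have h1 : i % M = i := Nat.mod_eq_of_lt h
    simp only [hW, h1]
  have hstep : ∀ i, PNaux.EStep PNaux.esrc PNaux.etgt (W i) (W (i+1)) := by
    intro i
    have hip : i % M < M := Nat.mod_lt _ hMpos
    have h1M : 1 % M = 1 := Nat.mod_eq_of_lt hM2
    by_cases hc : i % M + 1 < M
    · have h1 : (i+1) % M = i % M + 1 := by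
        rw [Nat.add_mod, h1M, Nat.mod_eq_of_lt hc]
      have h2 := List.isChain_iff_getElem.mp hch (i % M) (by omega)
      show PNaux.EStep _ _ (LL[i % M]'hip) (LL[(i+1) % M]'(Nat.mod_lt _ hMpos))
      simp only [h1]
      exact h2
    · have h1 : i % M = M - 1 := by omega
      have h2 : (i+1) % M = 0 := by
        rw [Nat.add_mod, h1M, h1, (by omega : M - 1 + 1 = M), Nat.mod_self]
      have hLLne : LL ≠ [] := List.length_pos_iff.mp hMpos
      have h4 := hclosed hLLne
      rw [List.getLast_eq_getElem hLLne, List.head_eq_getElem hLLne] at h4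
      show PNaux.EStep _ _ (LL[i % M]'hip) (LL[(i+1) % M]'(Nat.mod_lt _ hMpos))
      simp only [h1, h2]
      exact h4
  have hclass : ∀ i : ℕ, (W i).2 = (W 0).2 + ((i : ℕ) : ZMod t) := by
    intro i
    induction i with
    | zero => simp
    | succ i ih =>
        have h6 : (W i).2 + 1 = (W (i+1)).2 := congrArg Prod.snd (hstep i)
        rw [← h6, ih]
        push_cast
        ring
  have hshift : ∀ (d i k : ℕ) (h : k + d < n),
      (W (i+d)).1 ⟨k, by omega⟩ = (W i).1 ⟨k + d, h⟩ := by
    intro d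
    induction d with
    | zero => intro i k h; rfl
    | succ d ih =>
        intro i k h
        have h1 : i + (d+1) = (i+1) + d := by omega
        rw [h1, ih (i+1) k (by omega)]
        have hs' : (W i).1 ⟨k + d + 1, by omega⟩ = (W (i+1)).1 ⟨k + d, by omega⟩ :=
          congrFun (congrArg Prod.fst (hstep i)) ⟨k + d, by omega⟩
        exact hs'.symm
  have hwindow : ∀ (i : ℕ) (m : Fin n), v (i + m.1) = (W i).1 m := by
    intro i m
    have h1 := hshift m.1 i 0 (by have := m.isLt; omega)
    have h2 : v (i + m.1) = (W (i + m.1)).1 ⟨0, hnn⟩ := rfl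
    rw [h2, h1]
    have h3 : 0 + m.1 = m.1 := by omega
    exact congrArg _ (Fin.ext h3)
  have hper : ∀ i, v (i + t * a ^ n) = v i := by
    intro i
    have h1 : (i + t * a ^ n) % M = i % M := by
      rw [hlenM]
      exact Nat.add_mod_right i (t * a ^ n)
    show (W (i + t * a ^ n)).1 ⟨0, hnn⟩ = (W i).1 ⟨0, hnn⟩
    simp only [hW, h1]
  refine ⟨v, ⟨hper, ?_⟩, i0, ?_⟩
  · intro j w
    set ε : PNaux.NEdge a n t := (w, (W 0).2 + ((j : ℕ) : ZMod t)) with hε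
    have hprop : ∀ (i : ℕ) (hiM : i < M),
        (((i % t = (j : ℕ)) ∧ ∀ m : Fin n, v (i + m.1) = w m) ↔ W i = ε) := by
      intro i hiM
      constructor
      · rintro ⟨hmod, hwin⟩
        refine Prod.ext ?_ ?_
        · funext m
          rw [← hwindow i m, hwin m]
        · rw [hclass i]
          show (W 0).2 + _ = (W 0).2 + _
          congr 1
          rw [ZMod.natCast_eq_natCast_iff]
          show i % t = (j : ℕ) % t
          rw [hmod, Nat.mod_eq_of_lt j.isLt]
      · intro hWi
        constructor
        · have h5 := congrArg Prod.snd hWi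
          rw [hclass i] at h5
          have h6 : ((i : ℕ) : ZMod t) = (((j : ℕ) : ℕ) : ZMod t) := add_left_cancel h5
          have h7 := (ZMod.natCast_eq_natCast_iff _ _ _).mp h6
          have h8 : i % t = (j : ℕ) % t := h7
          rwa [Nat.mod_eq_of_lt j.isLt] at h8
        · intro m
          rw [hwindow i m, hWi]
    obtain ⟨idx, hidx⟩ := List.mem_iff_get.mp (hcompl ε)
    have hidxM : idx.1 < M := idx.isLt
    have hWidx : W idx.1 = ε := by
      rw [hWlt idx.1 hidxM, ← List.get_eq_getElem]
      exact hidx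
    refine ⟨⟨idx.1, hlenM ▸ hidxM⟩, (hprop idx.1 hidxM).mpr hWidx, ?_⟩
    rintro i' ⟨hmod', hwin'⟩
    have hi'M : (i' : ℕ) < M := by rw [hlenM]; exact i'.isLt
    have h8 : W i'.1 = ε := (hprop i'.1 hi'M).mp ⟨hmod', hwin'⟩
    have h11 : LL.get ⟨i'.1, hi'M⟩ = LL.get ⟨idx.1, hidxM⟩ := by
      rw [List.get_eq_getElem, List.get_eq_getElem, ← hWlt _ hi'M, ← hWlt _ hidxM, h8, hWidx]
    have h12 := List.nodup_iff_injective_get.mp hnd h11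
    exact Fin.ext (congrArg Fin.val h12 : (i' : ℕ) = idx.1)
  · intro m
    have hi0M : i0 < M := by omega
    have hi01M : i0 + 1 < M := hi0
    rcases Nat.lt_or_ge m.1 n with hm | hm
    · have h1 : v (i0 + m.1) = (W i0).1 ⟨m.1, hm⟩ := hwindow i0 ⟨m.1, hm⟩
      have h2 : W i0 = PNaux.edge1 t x := by rw [hWlt i0 hi0M]; exact he1
      rw [h1, h2]
      show x ⟨m.1, _⟩ = x m
      exact congrArg x (Fin.ext rfl)
    · have hmn : m.1 = n := by have := m.isLt; omega
      have h1 : v (i0 + m.1) = v ((i0 + 1) + (n - 1)) := by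
        congr 1
        omega
      have h2 : v ((i0+1) + (n-1)) = (W (i0+1)).1 ⟨n-1, by omega⟩ :=
        hwindow (i0+1) ⟨n-1, by omega⟩
      have h3 : W (i0+1) = PNaux.edge2 t x := by rw [hWlt (i0+1) hi01M]; exact he2
      rw [h1, h2, h3]
      show x ⟨(n-1) + 1, _⟩ = x m
      have h4 : (n-1) + 1 = m.1 := by omega
      exact congrArg x (Fin.ext h4)
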